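/- For p ∈ (0,1) and λ ∈ (1−p, 1), set ρ(λ) = λ/(1−p) > 1 and let K_λ be the smallest natural number K such that ρ(λ)^{−K} ≤ λ(1−λ)/(p(1−p)) (such K exists since ρ(λ) > 1 and λ(1−λ)/(p(1−p)) > 0). Then K_λ / ln(1/(1−λ)) → 1/ln(1/(1−p)) as λ → 1 from the left. -/

import Mathlib

open Filter

private lemma stmt14_mem_iff (p lam : ℝ) (hp0 : 0 < p) (hp1 : p < 1)
    (h1 : 1 - p < lam) (h2 : lam < 1) (K : ℕ) :
    ((lam / (1 - p)) ^ (-(K : ℤ)) ≤ lam * (1 - lam) / (p * (1 - p))) ↔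
      Real.log (p * (1 - p) / (lam * (1 - lam))) / Real.log (lam / (1 - p)) ≤ (K : ℝ) := by
  have hq0 : 0 < 1 - p := by linarith
  have hml : 0 < 1 - lam := by linarith
  have hlam0 : 0 < lam := by linarith
  have hρ : 1 < lam / (1 - p) := (one_lt_div hq0).mpr h1
  have hρ0 : 0 < lam / (1 - p) := by linarith
  have hc0 : 0 < lam * (1 - lam) / (p * (1 - p)) :=
    div_pos (mul_pos hlam0 hml) (mul_pos hp0 hq0)
  have hlogρ : 0 < Real.log (lam / (1 - p)) := Real.log_pos hρ
  rw [zpow_neg, zpow_natCast, inv_le_comm₀ (pow_pos hρ0 K) hc0,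
    ← Real.log_le_log_iff (inv_pos.mpr hc0) (pow_pos hρ0 K), Real.log_pow,
    show (lam * (1 - lam) / (p * (1 - p)))⁻¹ = p * (1 - p) / (lam * (1 - lam)) by
      rw [inv_div],
    div_le_iff₀ hlogρ]

theorem stmt_14 (p : ℝ) (hp : p ∈ Set.Ioo (0 : ℝ) 1) :
    Tendsto
      (fun lam : ℝ =>
        ((sInf {K : ℕ | (lam / (1 - p)) ^ (-(K : ℤ)) ≤ lam * (1 - lam) / (p * (1 - p))} : ℕ) : ℝ)
          / Real.log (1 / (1 - lam)))
      (nhdsWithin 1 (Set.Iio 1)) (nhds (1 / Real.log (1 / (1 - p)))) := by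
  obtain ⟨hp0, hp1⟩ := hp
  have hq0 : 0 < 1 - p := by linarith
  have hpq0 : 0 < p * (1 - p) := mul_pos hp0 hq0
  set l := nhdsWithin (1:ℝ) (Set.Iio 1) with hl
  set L : ℝ → ℝ := fun lam => Real.log (1 / (1 - lam)) with hLdef
  set x : ℝ → ℝ := fun lam =>
    Real.log (p * (1 - p) / (lam * (1 - lam))) / Real.log (lam / (1 - p)) with hxdef
  -- L → atTop
  have hL : Tendsto L l atTop := by
    have h1 : Tendsto (fun lam : ℝ => 1 - lam) l (nhdsWithin 0 (Set.Ioi 0)) := by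
      apply tendsto_nhdsWithin_of_tendsto_nhds_of_eventually_within
      · have h : Tendsto (fun lam : ℝ => 1 - lam) (nhds 1) (nhds (1 - 1)) :=
          tendsto_const_nhds.sub tendsto_id
        simpa using h.mono_left nhdsWithin_le_nhds
      · filter_upwards [self_mem_nhdsWithin] with lam (hlam : lam < 1)
        simpa using sub_pos.mpr hlam
    have h2 : Tendsto (fun lam : ℝ => 1 / (1 - lam)) l atTop := by
      simpa [one_div, Function.comp_def] using (tendsto_inv_nhdsGT_zero).comp h1
    exact Real.tendsto_log_atTop.comp h2
  -- eventual facts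
  have hev : ∀ᶠ lam in l, 1 - p < lam ∧ lam < 1 ∧ lam * (1 - lam) < p * (1 - p) ∧ 0 < L lam := by
    have hA : ∀ᶠ lam in l, 1 - p < lam := by
      have h : Tendsto (fun lam : ℝ => lam) l (nhds 1) := tendsto_id.mono_left nhdsWithin_le_nhds
      exact h.eventually_const_lt (by linarith)
    have hB : ∀ᶠ lam in l, lam < 1 := self_mem_nhdsWithin
    have hC : ∀ᶠ lam in l, lam * (1 - lam) < p * (1 - p) := by
      have h : Tendsto (fun lam : ℝ => lam * (1 - lam)) l (nhds (1 * (1 - 1))) :=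
        (tendsto_id.mul (tendsto_const_nhds.sub tendsto_id)).mono_left nhdsWithin_le_nhds
      have h' : Tendsto (fun lam : ℝ => lam * (1 - lam)) l (nhds 0) := by simpa using h
      exact h'.eventually_lt_const hpq0
    have hD : ∀ᶠ lam in l, 0 < L lam := hL.eventually_gt_atTop 0
    filter_upwards [hA, hB, hC, hD] with lam a b c d; exact ⟨a, b, c, d⟩
  -- bounds on sInf
  have hbound : ∀ᶠ lam in l,
      x lam ≤ ((sInf {K : ℕ | (lam / (1 - p)) ^ (-(K : ℤ)) ≤ lam * (1 - lam) / (p * (1 - p))} : ℕ) : ℝ)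
      ∧ ((sInf {K : ℕ | (lam / (1 - p)) ^ (-(K : ℤ)) ≤ lam * (1 - lam) / (p * (1 - p))} : ℕ) : ℝ)
        ≤ x lam + 1 := by
    filter_upwards [hev] with lam ⟨h1, h2, h3, _⟩
    have hlam0 : 0 < lam := by linarith
    have hml : 0 < 1 - lam := by linarith
    have hx0 : 0 ≤ x lam := by
      have hρ : 1 < lam / (1 - p) := (one_lt_div hq0).mpr h1
      have hnum : 0 ≤ Real.log (p * (1 - p) / (lam * (1 - lam))) := by
        apply Real.log_nonneg
        rw [le_div_iff₀ (mul_pos hlam0 hml)]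
        linarith
      exact div_nonneg hnum (Real.log_pos hρ).le
    have hmem : ∀ K : ℕ,
        K ∈ {K : ℕ | (lam / (1 - p)) ^ (-(K : ℤ)) ≤ lam * (1 - lam) / (p * (1 - p))} ↔
        x lam ≤ (K : ℝ) := fun K => stmt14_mem_iff p lam hp0 hp1 h1 h2 K
    have hceil : ⌈x lam⌉₊ ∈
        {K : ℕ | (lam / (1 - p)) ^ (-(K : ℤ)) ≤ lam * (1 - lam) / (p * (1 - p))} :=
      (hmem _).mpr (Nat.le_ceil _)
    constructor
    · exact (hmem _).mp (Nat.sInf_mem ⟨_, hceil⟩)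
    · calc ((sInf _ : ℕ) : ℝ) ≤ (⌈x lam⌉₊ : ℝ) := by
            exact_mod_cast Nat.sInf_le hceil
        _ ≤ x lam + 1 := le_of_lt (Nat.ceil_lt_add_one hx0)
  -- limit of x / L
  have hg : Tendsto (fun lam => x lam / L lam) l (nhds (1 / Real.log (1 / (1 - p)))) := by
    have hkey : Tendsto
        (fun lam => (Real.log (p * (1 - p) / lam) / L lam + 1) / Real.log (lam / (1 - p)))
        l (nhds (1 / Real.log (1 / (1 - p)))) := by
      have ha : Tendsto (fun lam : ℝ => Real.log (p * (1 - p) / lam)) l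
          (nhds (Real.log (p * (1 - p) / 1))) := by
        have hcont : ContinuousAt (fun lam : ℝ => Real.log (p * (1 - p) / lam)) 1 := by
          apply ContinuousAt.comp (Real.continuousAt_log (by simpa using hpq0.ne'))
          exact continuousAt_const.div continuousAt_id one_ne_zero
        exact hcont.tendsto.mono_left nhdsWithin_le_nhds
      have haL : Tendsto (fun lam => Real.log (p * (1 - p) / lam) / L lam) l (nhds 0) :=
        ha.div_atTop hL
      have hnum : Tendsto (fun lam => Real.log (p * (1 - p) / lam) / L lam + 1) l (nhds 1) := by
        simpa using haL.add (tendsto_const_nhds (x := (1:ℝ)))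
      have hden : Tendsto (fun lam : ℝ => Real.log (lam / (1 - p))) l
          (nhds (Real.log (1 / (1 - p)))) := by
        have hcont : ContinuousAt (fun lam : ℝ => Real.log (lam / (1 - p))) 1 := by
          apply ContinuousAt.comp (Real.continuousAt_log (by positivity))
          exact continuousAt_id.div continuousAt_const hq0.ne'
        exact hcont.tendsto.mono_left nhdsWithin_le_nhds
      have hne : Real.log (1 / (1 - p)) ≠ 0 := by
        have h : 1 < 1 / (1 - p) := by
          rw [lt_div_iff₀ hq0]; linarith
        exact (Real.log_pos h).ne'
      exact hnum.div hden hne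
    apply hkey.congr'
    filter_upwards [hev] with lam ⟨h1, h2, h3, hL0⟩
    have hlam0 : 0 < lam := by linarith
    have hml : 0 < 1 - lam := by linarith
    have hρ : 1 < lam / (1 - p) := (one_lt_div hq0).mpr h1
    have hLne : L lam ≠ 0 := hL0.ne'
    have hsplit : Real.log (p * (1 - p) / (lam * (1 - lam)))
        = Real.log (p * (1 - p) / lam) + L lam := by
      rw [hLdef]
      rw [show p * (1 - p) / (lam * (1 - lam)) = (p * (1 - p) / lam) * (1 / (1 - lam)) by
        field_simp]
      rw [Real.log_mul (by positivity) (by positivity)]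
    rw [hxdef]
    simp only [hsplit]
    rw [show (1:ℝ) = L lam / L lam from (div_self hLne).symm, ← add_div,
      div_div, div_div, mul_comm]
    rw [mul_comm (L lam)]
  -- conclude by squeeze
  have h1L : Tendsto (fun lam => 1 / L lam) l (nhds 0) := by
    simpa [one_div, Function.comp_def] using (tendsto_inv_atTop_zero).comp hL
  have hupper : Tendsto (fun lam => x lam / L lam + 1 / L lam) l
      (nhds (1 / Real.log (1 / (1 - p)))) := by
    simpa using hg.add h1L
  apply tendsto_of_tendsto_of_tendsto_of_le_of_le' hg hupper
  · filter_upwards [hev, hbound] with lam ⟨_, _, _, hL0⟩ ⟨hlo, _⟩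
    exact div_le_div_of_nonneg_right hlo hL0.le
  · filter_upwards [hev, hbound] with lam ⟨_, _, _, hL0⟩ ⟨_, hhi⟩
    calc _ ≤ (x lam + 1) / L lam := div_le_div_of_nonneg_right hhi hL0.le
      _ = x lam / L lam + 1 / L lam := add_div _ _ _
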